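/- arXiv:2007.02215 — 3 statements merged into one kernel-verified Lean document; each statement's English description precedes it below -/
import Mathlib

section
/- The set G' of 6×6 real matrices of the block form given by parameters a_i,b_i,c_i,d_i,λ_i,λ'_i,μ_i,μ'_i,κ ∈ ℝ (i=1,2), a_3 ∈ ℝ_{>0}, satisfying a_i d_i − b_i c_i = 1 and [λ_i μ_i] = a_3 [λ'_i μ'_i]·[[a_i,b_i],[c_i,d_i]] for i = 1,2, is a subgroup of GL(6,ℝ): it contains the identity, is closed under matrix multiplication, and is closed under taking inverses. -/
open Matrix

@[simp]
lemma cons_val_five' {m : ℕ} {α : Type*} (x : α) (u : Fin m.succ.succ.succ.succ.succ → α) :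
    vecCons x u 5 = vecHead (vecTail (vecTail (vecTail (vecTail u)))) :=
  rfl

/-- Membership in the linear group G' of Theorem 3.1. -/
def memG' (g : Matrix (Fin 6) (Fin 6) ℝ) : Prop :=
  ∃ a1 b1 c1 d1 a2 b2 c2 d2 a3 l1 l2 l1' l2' m1 m2 m1' m2' k : ℝ,
    0 < a3 ∧ a1 * d1 - b1 * c1 = 1 ∧ a2 * d2 - b2 * c2 = 1 ∧
    -- [λᵢ μᵢ] = a3 [λ'ᵢ μ'ᵢ]·[[aᵢ,bᵢ],[cᵢ,dᵢ]]
    l1 = a3 * (l1' * a1 + m1' * c1) ∧ m1 = a3 * (l1' * b1 + m1' * d1) ∧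
    l2 = a3 * (l2' * a2 + m2' * c2) ∧ m2 = a3 * (l2' * b2 + m2' * d2) ∧
    g = !![a1, 0, 0, b1, 0, m1';
           0, a2, 0, 0, b2, m2';
           l1, l2, a3, m1, m2, k;
           c1, 0, 0, d1, 0, -l1';
           0, c2, 0, 0, d2, -l2';
           0, 0, 0, 0, 0, a3⁻¹]

set_option maxHeartbeats 3200000 in
theorem G'_is_subgroup :
    memG' 1 ∧
    (∀ g h, memG' g → memG' h → memG' (g * h)) ∧
    (∀ g, memG' g → ∃ h, memG' h ∧ g * h = 1 ∧ h * g = 1) := by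
  refine ⟨?_, ?_, ?_⟩
  · -- identity
    refine ⟨1, 0, 0, 1, 1, 0, 0, 1, 1, 0, 0, 0, 0, 0, 0, 0, 0, 0,
      one_pos, by ring, by ring, by ring, by ring, by ring, by ring, ?_⟩
    ext i j
    fin_cases i <;> fin_cases j <;>
      simp [Matrix.one_apply, Matrix.vecHead, Matrix.vecTail]
  · -- closure under multiplication
    rintro g h ⟨a1, b1, c1, d1, a2, b2, c2, d2, a3, l1, l2, l1', l2', m1, m2, m1', m2', k,
      ha3, h1, h2, hl1, hm1, hl2, hm2, rfl⟩
    rintro ⟨A1, B1, C1, D1, A2, B2, C2, D2, A3, L1, L2, L1', L2', M1, M2, M1', M2', K,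
      hA3, H1, H2, HL1, HM1, HL2, HM2, rfl⟩
    have hA3' : A3 ≠ 0 := ne_of_gt hA3
    have e3 : A3 * A3⁻¹ = 1 := mul_inv_cancel₀ hA3'
    refine ⟨a1*A1 + b1*C1, a1*B1 + b1*D1, c1*A1 + d1*C1, c1*B1 + d1*D1,
      a2*A2 + b2*C2, a2*B2 + b2*D2, c2*A2 + d2*C2, c2*B2 + d2*D2,
      a3*A3,
      l1*A1 + a3*L1 + m1*C1, l2*A2 + a3*L2 + m2*C2,
      l1'*A3⁻¹ + d1*L1' - c1*M1', l2'*A3⁻¹ + d2*L2' - c2*M2',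
      l1*B1 + a3*M1 + m1*D1, l2*B2 + a3*M2 + m2*D2,
      a1*M1' - b1*L1' + m1'*A3⁻¹, a2*M2' - b2*L2' + m2'*A3⁻¹,
      l1*M1' + l2*M2' + a3*K - m1*L1' - m2*L2' + k*A3⁻¹,
      mul_pos ha3 hA3,
      by linear_combination (A1*D1 - B1*C1)*h1 + H1,
      by linear_combination (A2*D2 - B2*C2)*h2 + H2,
      by linear_combination A1*hl1 + C1*hm1 + a3*HL1
        - a3*(A1*(l1'*a1 + m1'*c1) + C1*(l1'*b1 + m1'*d1))*e3
        - a3*A3*(L1'*A1 + M1'*C1)*h1,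
      by linear_combination B1*hl1 + D1*hm1 + a3*HM1
        - a3*(B1*(l1'*a1 + m1'*c1) + D1*(l1'*b1 + m1'*d1))*e3
        - a3*A3*(L1'*B1 + M1'*D1)*h1,
      by linear_combination A2*hl2 + C2*hm2 + a3*HL2
        - a3*(A2*(l2'*a2 + m2'*c2) + C2*(l2'*b2 + m2'*d2))*e3
        - a3*A3*(L2'*A2 + M2'*C2)*h2,
      by linear_combination B2*hl2 + D2*hm2 + a3*HM2
        - a3*(B2*(l2'*a2 + m2'*c2) + D2*(l2'*b2 + m2'*d2))*e3
        - a3*A3*(L2'*B2 + M2'*D2)*h2,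
      ?_⟩
    ext i j
    fin_cases i <;> fin_cases j <;>
      simp [Matrix.mul_apply, Fin.sum_univ_six, Matrix.vecHead, Matrix.vecTail] <;>
      ring
  · -- inverses
    rintro g ⟨a1, b1, c1, d1, a2, b2, c2, d2, a3, l1, l2, l1', l2', m1, m2, m1', m2', k,
      ha3, h1, h2, hl1, hm1, hl2, hm2, rfl⟩
    have ha3' : a3 ≠ 0 := ne_of_gt ha3
    have e : a3 * a3⁻¹ = 1 := mul_inv_cancel₀ ha3'
    refine ⟨!![d1, 0, 0, -b1, 0, -(a3*(b1*l1' + d1*m1'));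
               0, d2, 0, 0, -b2, -(a3*(b2*l2' + d2*m2'));
               a3⁻¹*(-(a3*(a1*l1' + c1*m1'))*d1 + -(a3*(b1*l1' + d1*m1'))*(-c1)),
               a3⁻¹*(-(a3*(a2*l2' + c2*m2'))*d2 + -(a3*(b2*l2' + d2*m2'))*(-c2)),
               a3⁻¹,
               a3⁻¹*(-(a3*(a1*l1' + c1*m1'))*(-b1) + -(a3*(b1*l1' + d1*m1'))*a1),
               a3⁻¹*(-(a3*(a2*l2' + c2*m2'))*(-b2) + -(a3*(b2*l2' + d2*m2'))*a2),
               -(l1*(-(a3*(b1*l1' + d1*m1'))) + l2*(-(a3*(b2*l2' + d2*m2')))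
                 - m1*(-(a3*(a1*l1' + c1*m1'))) - m2*(-(a3*(a2*l2' + c2*m2'))) + k*a3)*a3⁻¹;
               -c1, 0, 0, a1, 0, -(-(a3*(a1*l1' + c1*m1')));
               0, -c2, 0, 0, a2, -(-(a3*(a2*l2' + c2*m2')));
               0, 0, 0, 0, 0, (a3⁻¹)⁻¹],
      ⟨d1, -b1, -c1, a1, d2, -b2, -c2, a2, a3⁻¹,
        a3⁻¹*(-(a3*(a1*l1' + c1*m1'))*d1 + -(a3*(b1*l1' + d1*m1'))*(-c1)),
        a3⁻¹*(-(a3*(a2*l2' + c2*m2'))*d2 + -(a3*(b2*l2' + d2*m2'))*(-c2)),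
        -(a3*(a1*l1' + c1*m1')), -(a3*(a2*l2' + c2*m2')),
        a3⁻¹*(-(a3*(a1*l1' + c1*m1'))*(-b1) + -(a3*(b1*l1' + d1*m1'))*a1),
        a3⁻¹*(-(a3*(a2*l2' + c2*m2'))*(-b2) + -(a3*(b2*l2' + d2*m2'))*a2),
        -(a3*(b1*l1' + d1*m1')), -(a3*(b2*l2' + d2*m2')),
        -(l1*(-(a3*(b1*l1' + d1*m1'))) + l2*(-(a3*(b2*l2' + d2*m2')))
          - m1*(-(a3*(a1*l1' + c1*m1'))) - m2*(-(a3*(a2*l2' + c2*m2'))) + k*a3)*a3⁻¹,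
        inv_pos.mpr ha3,
        by linear_combination h1, by linear_combination h2,
        by ring, by ring, by ring, by ring, rfl⟩,
      ?_, ?_⟩
    · ext i j
      fin_cases i <;> fin_cases j <;>
        simp [Matrix.mul_apply, Fin.sum_univ_six, Matrix.one_apply,
          Matrix.vecHead, Matrix.vecTail] <;>
        first
        | ring1
        | linear_combination h1
        | linear_combination h2
        | linear_combination e
        | linear_combination -a3*m1'*h1
        | linear_combination -a3*m2'*h2
        | linear_combination a3*l1'*h1
        | linear_combination a3*l2'*h2
        | linear_combination d1*hl1 - c1*hm1 - a3*l1'*(a1*d1 - b1*c1)*e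
        | linear_combination d2*hl2 - c2*hm2 - a3*l2'*(a2*d2 - b2*c2)*e
        | linear_combination -b1*hl1 + a1*hm1 - a3*m1'*(a1*d1 - b1*c1)*e
        | linear_combination -b2*hl2 + a2*hm2 - a3*m2'*(a2*d2 - b2*c2)*e
        | linear_combination -(l1*(-(a3*(b1*l1' + d1*m1'))) + l2*(-(a3*(b2*l2' + d2*m2')))
            - m1*(-(a3*(a1*l1' + c1*m1'))) - m2*(-(a3*(a2*l2' + c2*m2'))) + k*a3)*e
    · ext i j
      fin_cases i <;> fin_cases j <;>
        simp [Matrix.mul_apply, Fin.sum_univ_six, Matrix.one_apply,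
          Matrix.vecHead, Matrix.vecTail] <;>
        first
        | ring1
        | linear_combination h1
        | linear_combination h2
        | linear_combination e
        | linear_combination -(d1*m1' + b1*l1')*e
        | linear_combination -(d2*m2' + b2*l2')*e
        | linear_combination (a1*l1' + c1*m1')*e
        | linear_combination (a2*l2' + c2*m2')*e
        | linear_combination a3⁻¹*hl1 - a3*a3⁻¹*(l1'*a1 + m1'*c1)*h1
        | linear_combination a3⁻¹*hl2 - a3*a3⁻¹*(l2'*a2 + m2'*c2)*h2
        | linear_combination a3⁻¹*hm1 - a3*a3⁻¹*(l1'*b1 + m1'*d1)*h1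
        | linear_combination a3⁻¹*hm2 - a3*a3⁻¹*(l2'*b2 + m2'*d2)*h2
        | linear_combination -a3⁻¹*k*e + a3⁻¹*a3⁻¹*a3*((b1*l1' + d1*m1')*hl1
            - (a1*l1' + c1*m1')*hm1 + (b2*l2' + d2*m2')*hl2 - (a2*l2' + c2*m2')*hm2)
end

section
/- The twelve matrices E1, E2, E3, E31, E32, A1, A2, A3, A31, A32, W1, W2 in M_6(ℝ), defined so that a general linear combination equals the displayed 6×6 matrix with entries like a1/2, e1−k1, etc., are linearly independent, and their real span g' is closed under the matrix commutator, i.e., g' is a Lie subalgebra of gl(6,ℝ). -/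
open Matrix

abbrev M6 := Matrix (Fin 6) (Fin 6) ℝ

noncomputable def E1 : M6 := !![0,0,0,1,0,0; 0,0,0,0,0,0; 0,0,0,0,0,0; 0,0,0,0,0,0; 0,0,0,0,0,0; 0,0,0,0,0,0]
noncomputable def E2 : M6 := !![0,0,0,0,0,0; 0,0,0,0,1,0; 0,0,0,0,0,0; 0,0,0,0,0,0; 0,0,0,0,0,0; 0,0,0,0,0,0]
noncomputable def E3 : M6 := !![0,0,0,0,0,0; 0,0,0,0,0,0; 0,0,0,0,0,1; 0,0,0,0,0,0; 0,0,0,0,0,0; 0,0,0,0,0,0]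
noncomputable def E31 : M6 := !![0,0,0,0,0,1; 0,0,0,0,0,0; 0,0,0,1,0,0; 0,0,0,0,0,0; 0,0,0,0,0,0; 0,0,0,0,0,0]
noncomputable def E32 : M6 := !![0,0,0,0,0,0; 0,0,0,0,0,1; 0,0,0,0,1,0; 0,0,0,0,0,0; 0,0,0,0,0,0; 0,0,0,0,0,0]
noncomputable def A1 : M6 := !![(1/2),0,0,0,0,0; 0,0,0,0,0,0; 0,0,0,0,0,0; 0,0,0,(-1/2),0,0; 0,0,0,0,0,0; 0,0,0,0,0,0]
noncomputable def A2 : M6 := !![0,0,0,0,0,0; 0,(1/2),0,0,0,0; 0,0,0,0,0,0; 0,0,0,0,0,0; 0,0,0,0,(-1/2),0; 0,0,0,0,0,0]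
noncomputable def A3 : M6 := !![0,0,0,0,0,0; 0,0,0,0,0,0; 0,0,(1/2),0,0,0; 0,0,0,0,0,0; 0,0,0,0,0,0; 0,0,0,0,0,(-1/2)]
noncomputable def A31 : M6 := !![0,0,0,0,0,0; 0,0,0,0,0,0; 1,0,0,0,0,0; 0,0,0,0,0,-1; 0,0,0,0,0,0; 0,0,0,0,0,0]
noncomputable def A32 : M6 := !![0,0,0,0,0,0; 0,0,0,0,0,0; 0,1,0,0,0,0; 0,0,0,0,0,0; 0,0,0,0,0,-1; 0,0,0,0,0,0]
noncomputable def W1 : M6 := !![0,0,0,-1,0,0; 0,0,0,0,0,0; 0,0,0,0,0,0; 1,0,0,0,0,0; 0,0,0,0,0,0; 0,0,0,0,0,0]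
noncomputable def W2 : M6 := !![0,0,0,0,0,0; 0,0,0,0,-1,0; 0,0,0,0,0,0; 0,0,0,0,0,0; 0,1,0,0,0,0; 0,0,0,0,0,0]

noncomputable def gens : Set M6 := {E1, E2, E3, E31, E32, A1, A2, A3, A31, A32, W1, W2}

attribute [local instance 100] LieRing.ofAssociativeRing

noncomputable def gLie : LieSubalgebra ℝ M6 := LieSubalgebra.lieSpan ℝ M6 gens

/-! ### Auxiliary machinery -/

lemma cons_val_mk_zero' {α : Type*} {m : ℕ} (x : α) (u : Fin m → α) (h : 0 < m + 1) :
    Matrix.vecCons x u ⟨0, h⟩ = x := rfl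

lemma entry_apply' (i j : Fin 6) (m : M6) : Matrix.entryLinearMap ℝ ℝ i j m = m i j := rfl

/-- The linear conditions cutting out the span of the twelve generators. -/
def mcond (m : M6) : Prop :=
  m 0 1 = 0 ∧ m 0 2 = 0 ∧ m 0 4 = 0 ∧ m 1 0 = 0 ∧ m 1 2 = 0 ∧ m 1 3 = 0 ∧ m 3 1 = 0 ∧
  m 3 2 = 0 ∧ m 3 4 = 0 ∧ m 4 0 = 0 ∧ m 4 2 = 0 ∧ m 4 3 = 0 ∧ m 5 0 = 0 ∧ m 5 1 = 0 ∧
  m 5 2 = 0 ∧ m 5 3 = 0 ∧ m 5 4 = 0 ∧ m 3 3 = -m 0 0 ∧ m 4 4 = -m 1 1 ∧ m 5 5 = -m 2 2 ∧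
  m 2 3 = m 0 5 ∧ m 2 4 = m 1 5 ∧ m 3 5 = -m 2 0 ∧ m 4 5 = -m 2 1

lemma mcond_bracket {x y : M6} (hx : mcond x) (hy : mcond y) : mcond ⁅x, y⁆ := by
  obtain ⟨hx1, hx2, hx3, hx4, hx5, hx6, hx7, hx8, hx9, hx10, hx11, hx12, hx13, hx14, hx15, hx16, hx17, hx18, hx19, hx20, hx21, hx22, hx23, hx24⟩ := hx
  obtain ⟨hy1, hy2, hy3, hy4, hy5, hy6, hy7, hy8, hy9, hy10, hy11, hy12, hy13, hy14, hy15, hy16, hy17, hy18, hy19, hy20, hy21, hy22, hy23, hy24⟩ := hy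
  refine ⟨?_, ?_, ?_, ?_, ?_, ?_, ?_, ?_, ?_, ?_, ?_, ?_, ?_, ?_, ?_, ?_, ?_, ?_, ?_, ?_, ?_, ?_, ?_, ?_⟩ <;>
    simp only [Ring.lie_def, Matrix.sub_apply, Matrix.mul_apply, Fin.sum_univ_six,
      hx1, hx2, hx3, hx4, hx5, hx6, hx7, hx8, hx9, hx10, hx11, hx12, hx13, hx14, hx15, hx16, hx17, hx18, hx19, hx20, hx21, hx22, hx23, hx24,
      hy1, hy2, hy3, hy4, hy5, hy6, hy7, hy8, hy9, hy10, hy11, hy12, hy13, hy14, hy15, hy16, hy17, hy18, hy19, hy20, hy21, hy22, hy23, hy24] <;>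
    ring

lemma mcond_of_mem_span {m : M6} (hm : m ∈ Submodule.span ℝ gens) : mcond m := by
  induction hm using Submodule.span_induction with
  | mem x hx =>
    simp only [gens, Set.mem_insert_iff, Set.mem_singleton_iff] at hx
    rcases hx with rfl | rfl | rfl | rfl | rfl | rfl | rfl | rfl | rfl | rfl | rfl | rfl <;>
      · simp only [mcond, E1, E2, E3, E31, E32, A1, A2, A3, A31, A32, W1, W2, Matrix.of_apply,
          show (1:Fin 6) = ⟨1, by omega⟩ from rfl, show (2:Fin 6) = ⟨2, by omega⟩ from rfl,
          show (3:Fin 6) = ⟨3, by omega⟩ from rfl, show (4:Fin 6) = ⟨4, by omega⟩ from rfl,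
          show (5:Fin 6) = ⟨5, by omega⟩ from rfl, show (0:Fin 6) = ⟨0, by omega⟩ from rfl,
          Matrix.cons_val_succ', cons_val_mk_zero']
        norm_num
  | zero => simp [mcond]
  | add x y _ _ hx hy =>
    obtain ⟨hx1, hx2, hx3, hx4, hx5, hx6, hx7, hx8, hx9, hx10, hx11, hx12, hx13, hx14, hx15, hx16, hx17, hx18, hx19, hx20, hx21, hx22, hx23, hx24⟩ := hx
    obtain ⟨hy1, hy2, hy3, hy4, hy5, hy6, hy7, hy8, hy9, hy10, hy11, hy12, hy13, hy14, hy15, hy16, hy17, hy18, hy19, hy20, hy21, hy22, hy23, hy24⟩ := hy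
    refine ⟨?_, ?_, ?_, ?_, ?_, ?_, ?_, ?_, ?_, ?_, ?_, ?_, ?_, ?_, ?_, ?_, ?_, ?_, ?_, ?_, ?_, ?_, ?_, ?_⟩ <;>
      simp only [Matrix.add_apply,
        hx1, hx2, hx3, hx4, hx5, hx6, hx7, hx8, hx9, hx10, hx11, hx12, hx13, hx14, hx15, hx16, hx17, hx18, hx19, hx20, hx21, hx22, hx23, hx24,
        hy1, hy2, hy3, hy4, hy5, hy6, hy7, hy8, hy9, hy10, hy11, hy12, hy13, hy14, hy15, hy16, hy17, hy18, hy19, hy20, hy21, hy22, hy23, hy24] <;>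
      ring
  | smul r x _ hx =>
    obtain ⟨hx1, hx2, hx3, hx4, hx5, hx6, hx7, hx8, hx9, hx10, hx11, hx12, hx13, hx14, hx15, hx16, hx17, hx18, hx19, hx20, hx21, hx22, hx23, hx24⟩ := hx
    refine ⟨?_, ?_, ?_, ?_, ?_, ?_, ?_, ?_, ?_, ?_, ?_, ?_, ?_, ?_, ?_, ?_, ?_, ?_, ?_, ?_, ?_, ?_, ?_, ?_⟩ <;>
      simp only [Matrix.smul_apply, smul_eq_mul,
        hx1, hx2, hx3, hx4, hx5, hx6, hx7, hx8, hx9, hx10, hx11, hx12, hx13, hx14, hx15, hx16, hx17, hx18, hx19, hx20, hx21, hx22, hx23, hx24] <;>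
      ring

set_option maxHeartbeats 1000000 in
lemma mem_span_of_mcond {m : M6} (hm : mcond m) : m ∈ Submodule.span ℝ gens := by
  obtain ⟨h1, h2, h3, h4, h5, h6, h7, h8, h9, h10, h11, h12, h13, h14, h15, h16, h17, h18, h19, h20, h21, h22, h23, h24⟩ := hm
  have key : m = (m 0 3 + m 3 0) • E1 + (m 1 4 + m 4 1) • E2 + m 2 5 • E3 + m 0 5 • E31 +
      m 1 5 • E32 + (2 * m 0 0) • A1 + (2 * m 1 1) • A2 + (2 * m 2 2) • A3 + m 2 0 • A31 +
      m 2 1 • A32 + m 3 0 • W1 + m 4 1 • W2 := by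
    simp only [show (1:Fin 6) = ⟨1, by omega⟩ from rfl, show (2:Fin 6) = ⟨2, by omega⟩ from rfl,
      show (3:Fin 6) = ⟨3, by omega⟩ from rfl, show (4:Fin 6) = ⟨4, by omega⟩ from rfl,
      show (5:Fin 6) = ⟨5, by omega⟩ from rfl, show (0:Fin 6) = ⟨0, by omega⟩ from rfl]
      at h1 h2 h3 h4 h5 h6 h7 h8 h9 h10 h11 h12 h13 h14 h15 h16 h17 h18 h19 h20 h21 h22 h23 h24 ⊢
    funext i j
    fin_cases i <;> fin_cases j <;>
      · simp only [Matrix.add_apply, Matrix.smul_apply, smul_eq_mul, E1, E2, E3, E31, E32, A1, A2,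
          A3, A31, A32, W1, W2, Matrix.of_apply, Matrix.cons_val_succ', cons_val_mk_zero',
          h1, h2, h3, h4, h5, h6, h7, h8, h9, h10, h11, h12, h13, h14, h15, h16, h17, h18,
          h19, h20, h21, h22, h23, h24]
        ring
  have hg : ∀ x ∈ gens, x ∈ Submodule.span ℝ gens := fun x hx => Submodule.subset_span hx
  rw [key]
  have hE1 : E1 ∈ gens := by simp [gens]
  have hE2 : E2 ∈ gens := by simp [gens]
  have hE3 : E3 ∈ gens := by simp [gens]
  have hE31 : E31 ∈ gens := by simp [gens]
  have hE32 : E32 ∈ gens := by simp [gens]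
  have hA1 : A1 ∈ gens := by simp [gens]
  have hA2 : A2 ∈ gens := by simp [gens]
  have hA3 : A3 ∈ gens := by simp [gens]
  have hA31 : A31 ∈ gens := by simp [gens]
  have hA32 : A32 ∈ gens := by simp [gens]
  have hW1 : W1 ∈ gens := by simp [gens]
  have hW2 : W2 ∈ gens := by simp [gens]
  exact Submodule.add_mem _ (Submodule.add_mem _ (Submodule.add_mem _ (Submodule.add_mem _
    (Submodule.add_mem _ (Submodule.add_mem _ (Submodule.add_mem _ (Submodule.add_mem _
    (Submodule.add_mem _ (Submodule.add_mem _ (Submodule.add_mem _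
    (Submodule.smul_mem _ _ (hg _ hE1)) (Submodule.smul_mem _ _ (hg _ hE2)))
    (Submodule.smul_mem _ _ (hg _ hE3))) (Submodule.smul_mem _ _ (hg _ hE31)))
    (Submodule.smul_mem _ _ (hg _ hE32))) (Submodule.smul_mem _ _ (hg _ hA1)))
    (Submodule.smul_mem _ _ (hg _ hA2))) (Submodule.smul_mem _ _ (hg _ hA3)))
    (Submodule.smul_mem _ _ (hg _ hA31))) (Submodule.smul_mem _ _ (hg _ hA32)))
    (Submodule.smul_mem _ _ (hg _ hW1))) (Submodule.smul_mem _ _ (hg _ hW2))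

/-- Coordinate functionals picking out the twelve free entries. -/
noncomputable def Lmap : M6 →ₗ[ℝ] (Fin 12 → ℝ) :=
  LinearMap.pi ![
    Matrix.entryLinearMap ℝ ℝ 0 3 + Matrix.entryLinearMap ℝ ℝ 3 0,
    Matrix.entryLinearMap ℝ ℝ 1 4 + Matrix.entryLinearMap ℝ ℝ 4 1,
    Matrix.entryLinearMap ℝ ℝ 2 5,
    Matrix.entryLinearMap ℝ ℝ 0 5,
    Matrix.entryLinearMap ℝ ℝ 1 5,
    (2:ℝ) • Matrix.entryLinearMap ℝ ℝ 0 0,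
    (2:ℝ) • Matrix.entryLinearMap ℝ ℝ 1 1,
    (2:ℝ) • Matrix.entryLinearMap ℝ ℝ 2 2,
    Matrix.entryLinearMap ℝ ℝ 2 0,
    Matrix.entryLinearMap ℝ ℝ 2 1,
    Matrix.entryLinearMap ℝ ℝ 3 0,
    Matrix.entryLinearMap ℝ ℝ 4 1]

set_option maxHeartbeats 1000000 in
theorem basis_independent_and_span_closed_under_bracket :
    LinearIndependent ℝ (![E1, E2, E3, E31, E32, A1, A2, A3, A31, A32, W1, W2] : Fin 12 → M6) ∧
    ∀ x ∈ Submodule.span ℝ gens, ∀ y ∈ Submodule.span ℝ gens,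
      ⁅x, y⁆ ∈ Submodule.span ℝ gens := by
  constructor
  · have hli : LinearIndependent ℝ (fun i : Fin 12 => (Pi.single i 1 : Fin 12 → ℝ)) := by
      rw [Fintype.linearIndependent_iff]
      intro g h i
      have h2 := congrFun h i
      simpa [Finset.sum_apply, Pi.single_apply] using h2
    have hcomp : Lmap ∘ ![E1, E2, E3, E31, E32, A1, A2, A3, A31, A32, W1, W2]
        = fun i : Fin 12 => (Pi.single i 1 : Fin 12 → ℝ) := by
      funext i j
      fin_cases i <;> fin_cases j <;>
        simp only [Function.comp_apply, Lmap, LinearMap.pi_apply, LinearMap.add_apply,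
          LinearMap.smul_apply, smul_eq_mul, entry_apply', Matrix.cons_val_succ',
          cons_val_mk_zero', Matrix.cons_val_zero, Matrix.cons_val_one, Matrix.head_cons,
          E1, E2, E3, E31, E32, A1, A2, A3, A31, A32, W1, W2, Matrix.of_apply,
          show (1:Fin 6) = ⟨1, by omega⟩ from rfl, show (2:Fin 6) = ⟨2, by omega⟩ from rfl,
          show (3:Fin 6) = ⟨3, by omega⟩ from rfl, show (4:Fin 6) = ⟨4, by omega⟩ from rfl,
          show (5:Fin 6) = ⟨5, by omega⟩ from rfl, show (0:Fin 6) = ⟨0, by omega⟩ from rfl,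
          Pi.single_apply] <;>
        norm_num [Fin.ext_iff]
    exact LinearIndependent.of_comp Lmap (hcomp ▸ hli)
  · intro x hx y hy
    exact mem_span_of_mcond (mcond_bracket (mcond_of_mem_span hx) (mcond_of_mem_span hy))
end

section
/- If h is an ideal of the Lie algebra g that strictly contains the span of E3, then h contains h3 = span{E3, E31, A31} or h3' = span{E3, E32, A32}. -/
open Matrix

attribute [local instance 100] LieRing.ofAssociativeRing

lemma memE1 : E1 ∈ gLie := LieSubalgebra.subset_lieSpan (by simp [gens])
lemma memE2 : E2 ∈ gLie := LieSubalgebra.subset_lieSpan (by simp [gens])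
lemma memE3 : E3 ∈ gLie := LieSubalgebra.subset_lieSpan (by simp [gens])
lemma memE31 : E31 ∈ gLie := LieSubalgebra.subset_lieSpan (by simp [gens])
lemma memE32 : E32 ∈ gLie := LieSubalgebra.subset_lieSpan (by simp [gens])
lemma memA1 : A1 ∈ gLie := LieSubalgebra.subset_lieSpan (by simp [gens])
lemma memA2 : A2 ∈ gLie := LieSubalgebra.subset_lieSpan (by simp [gens])
lemma memA3 : A3 ∈ gLie := LieSubalgebra.subset_lieSpan (by simp [gens])
lemma memA31 : A31 ∈ gLie := LieSubalgebra.subset_lieSpan (by simp [gens])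
lemma memA32 : A32 ∈ gLie := LieSubalgebra.subset_lieSpan (by simp [gens])
lemma memW1 : W1 ∈ gLie := LieSubalgebra.subset_lieSpan (by simp [gens])
lemma memW2 : W2 ∈ gLie := LieSubalgebra.subset_lieSpan (by simp [gens])

noncomputable abbrev gE1 : ↥gLie := ⟨E1, memE1⟩
noncomputable abbrev gE2 : ↥gLie := ⟨E2, memE2⟩
noncomputable abbrev gE3 : ↥gLie := ⟨E3, memE3⟩
noncomputable abbrev gE31 : ↥gLie := ⟨E31, memE31⟩
noncomputable abbrev gE32 : ↥gLie := ⟨E32, memE32⟩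
noncomputable abbrev gA1 : ↥gLie := ⟨A1, memA1⟩
noncomputable abbrev gA2 : ↥gLie := ⟨A2, memA2⟩
noncomputable abbrev gA3 : ↥gLie := ⟨A3, memA3⟩
noncomputable abbrev gA31 : ↥gLie := ⟨A31, memA31⟩
noncomputable abbrev gA32 : ↥gLie := ⟨A32, memA32⟩
noncomputable abbrev gW1 : ↥gLie := ⟨W1, memW1⟩
noncomputable abbrev gW2 : ↥gLie := ⟨W2, memW2⟩


section Infra

set_option maxHeartbeats 1000000

section vecLemmas
variable {α : Type*}

@[simp] lemma vec6_0 (a0 a1 a2 a3 a4 a5 : α) : ![a0,a1,a2,a3,a4,a5] 0 = a0 := rfl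
@[simp] lemma vec6_1 (a0 a1 a2 a3 a4 a5 : α) : ![a0,a1,a2,a3,a4,a5] 1 = a1 := rfl
@[simp] lemma vec6_2 (a0 a1 a2 a3 a4 a5 : α) : ![a0,a1,a2,a3,a4,a5] 2 = a2 := rfl
@[simp] lemma vec6_3 (a0 a1 a2 a3 a4 a5 : α) : ![a0,a1,a2,a3,a4,a5] 3 = a3 := rfl
@[simp] lemma vec6_4 (a0 a1 a2 a3 a4 a5 : α) : ![a0,a1,a2,a3,a4,a5] 4 = a4 := rfl
@[simp] lemma vec6_5 (a0 a1 a2 a3 a4 a5 : α) : ![a0,a1,a2,a3,a4,a5] 5 = a5 := rfl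
@[simp] lemma vec12_0 (a0 a1 a2 a3 a4 a5 a6 a7 a8 a9 a10 a11 : α) : ![a0,a1,a2,a3,a4,a5,a6,a7,a8,a9,a10,a11] (0 : Fin 12) = a0 := rfl
@[simp] lemma vec12_1 (a0 a1 a2 a3 a4 a5 a6 a7 a8 a9 a10 a11 : α) : ![a0,a1,a2,a3,a4,a5,a6,a7,a8,a9,a10,a11] (1 : Fin 12) = a1 := rfl
@[simp] lemma vec12_2 (a0 a1 a2 a3 a4 a5 a6 a7 a8 a9 a10 a11 : α) : ![a0,a1,a2,a3,a4,a5,a6,a7,a8,a9,a10,a11] (2 : Fin 12) = a2 := rfl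
@[simp] lemma vec12_3 (a0 a1 a2 a3 a4 a5 a6 a7 a8 a9 a10 a11 : α) : ![a0,a1,a2,a3,a4,a5,a6,a7,a8,a9,a10,a11] (3 : Fin 12) = a3 := rfl
@[simp] lemma vec12_4 (a0 a1 a2 a3 a4 a5 a6 a7 a8 a9 a10 a11 : α) : ![a0,a1,a2,a3,a4,a5,a6,a7,a8,a9,a10,a11] (4 : Fin 12) = a4 := rfl
@[simp] lemma vec12_5 (a0 a1 a2 a3 a4 a5 a6 a7 a8 a9 a10 a11 : α) : ![a0,a1,a2,a3,a4,a5,a6,a7,a8,a9,a10,a11] (5 : Fin 12) = a5 := rfl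
@[simp] lemma vec12_6 (a0 a1 a2 a3 a4 a5 a6 a7 a8 a9 a10 a11 : α) : ![a0,a1,a2,a3,a4,a5,a6,a7,a8,a9,a10,a11] (6 : Fin 12) = a6 := rfl
@[simp] lemma vec12_7 (a0 a1 a2 a3 a4 a5 a6 a7 a8 a9 a10 a11 : α) : ![a0,a1,a2,a3,a4,a5,a6,a7,a8,a9,a10,a11] (7 : Fin 12) = a7 := rfl
@[simp] lemma vec12_8 (a0 a1 a2 a3 a4 a5 a6 a7 a8 a9 a10 a11 : α) : ![a0,a1,a2,a3,a4,a5,a6,a7,a8,a9,a10,a11] (8 : Fin 12) = a8 := rfl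
@[simp] lemma vec12_9 (a0 a1 a2 a3 a4 a5 a6 a7 a8 a9 a10 a11 : α) : ![a0,a1,a2,a3,a4,a5,a6,a7,a8,a9,a10,a11] (9 : Fin 12) = a9 := rfl
@[simp] lemma vec12_10 (a0 a1 a2 a3 a4 a5 a6 a7 a8 a9 a10 a11 : α) : ![a0,a1,a2,a3,a4,a5,a6,a7,a8,a9,a10,a11] (10 : Fin 12) = a10 := rfl
@[simp] lemma vec12_11 (a0 a1 a2 a3 a4 a5 a6 a7 a8 a9 a10 a11 : α) : ![a0,a1,a2,a3,a4,a5,a6,a7,a8,a9,a10,a11] (11 : Fin 12) = a11 := rfl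

end vecLemmas

section consLemmas
variable {α : Type*}
@[simp] lemma cons2_1 (a : α) (u : Fin 1 → α) : Matrix.vecCons a u (1 : Fin 2) = u 0 := rfl
@[simp] lemma cons3_1 (a : α) (u : Fin 2 → α) : Matrix.vecCons a u (1 : Fin 3) = u 0 := rfl
@[simp] lemma cons3_2 (a : α) (u : Fin 2 → α) : Matrix.vecCons a u (2 : Fin 3) = u 1 := rfl
@[simp] lemma cons4_1 (a : α) (u : Fin 3 → α) : Matrix.vecCons a u (1 : Fin 4) = u 0 := rfl
@[simp] lemma cons4_2 (a : α) (u : Fin 3 → α) : Matrix.vecCons a u (2 : Fin 4) = u 1 := rfl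
@[simp] lemma cons4_3 (a : α) (u : Fin 3 → α) : Matrix.vecCons a u (3 : Fin 4) = u 2 := rfl
@[simp] lemma cons5_1 (a : α) (u : Fin 4 → α) : Matrix.vecCons a u (1 : Fin 5) = u 0 := rfl
@[simp] lemma cons5_2 (a : α) (u : Fin 4 → α) : Matrix.vecCons a u (2 : Fin 5) = u 1 := rfl
@[simp] lemma cons5_3 (a : α) (u : Fin 4 → α) : Matrix.vecCons a u (3 : Fin 5) = u 2 := rfl
@[simp] lemma cons5_4 (a : α) (u : Fin 4 → α) : Matrix.vecCons a u (4 : Fin 5) = u 3 := rfl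
@[simp] lemma cons6_1 (a : α) (u : Fin 5 → α) : Matrix.vecCons a u (1 : Fin 6) = u 0 := rfl
@[simp] lemma cons6_2 (a : α) (u : Fin 5 → α) : Matrix.vecCons a u (2 : Fin 6) = u 1 := rfl
@[simp] lemma cons6_3 (a : α) (u : Fin 5 → α) : Matrix.vecCons a u (3 : Fin 6) = u 2 := rfl
@[simp] lemma cons6_4 (a : α) (u : Fin 5 → α) : Matrix.vecCons a u (4 : Fin 6) = u 3 := rfl
@[simp] lemma cons6_5 (a : α) (u : Fin 5 → α) : Matrix.vecCons a u (5 : Fin 6) = u 4 := rfl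
@[simp] lemma cons7_1 (a : α) (u : Fin 6 → α) : Matrix.vecCons a u (1 : Fin 7) = u 0 := rfl
@[simp] lemma cons7_2 (a : α) (u : Fin 6 → α) : Matrix.vecCons a u (2 : Fin 7) = u 1 := rfl
@[simp] lemma cons7_3 (a : α) (u : Fin 6 → α) : Matrix.vecCons a u (3 : Fin 7) = u 2 := rfl
@[simp] lemma cons7_4 (a : α) (u : Fin 6 → α) : Matrix.vecCons a u (4 : Fin 7) = u 3 := rfl
@[simp] lemma cons7_5 (a : α) (u : Fin 6 → α) : Matrix.vecCons a u (5 : Fin 7) = u 4 := rfl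
@[simp] lemma cons7_6 (a : α) (u : Fin 6 → α) : Matrix.vecCons a u (6 : Fin 7) = u 5 := rfl
@[simp] lemma cons8_1 (a : α) (u : Fin 7 → α) : Matrix.vecCons a u (1 : Fin 8) = u 0 := rfl
@[simp] lemma cons8_2 (a : α) (u : Fin 7 → α) : Matrix.vecCons a u (2 : Fin 8) = u 1 := rfl
@[simp] lemma cons8_3 (a : α) (u : Fin 7 → α) : Matrix.vecCons a u (3 : Fin 8) = u 2 := rfl
@[simp] lemma cons8_4 (a : α) (u : Fin 7 → α) : Matrix.vecCons a u (4 : Fin 8) = u 3 := rfl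
@[simp] lemma cons8_5 (a : α) (u : Fin 7 → α) : Matrix.vecCons a u (5 : Fin 8) = u 4 := rfl
@[simp] lemma cons8_6 (a : α) (u : Fin 7 → α) : Matrix.vecCons a u (6 : Fin 8) = u 5 := rfl
@[simp] lemma cons8_7 (a : α) (u : Fin 7 → α) : Matrix.vecCons a u (7 : Fin 8) = u 6 := rfl
@[simp] lemma cons9_1 (a : α) (u : Fin 8 → α) : Matrix.vecCons a u (1 : Fin 9) = u 0 := rfl
@[simp] lemma cons9_2 (a : α) (u : Fin 8 → α) : Matrix.vecCons a u (2 : Fin 9) = u 1 := rfl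
@[simp] lemma cons9_3 (a : α) (u : Fin 8 → α) : Matrix.vecCons a u (3 : Fin 9) = u 2 := rfl
@[simp] lemma cons9_4 (a : α) (u : Fin 8 → α) : Matrix.vecCons a u (4 : Fin 9) = u 3 := rfl
@[simp] lemma cons9_5 (a : α) (u : Fin 8 → α) : Matrix.vecCons a u (5 : Fin 9) = u 4 := rfl
@[simp] lemma cons9_6 (a : α) (u : Fin 8 → α) : Matrix.vecCons a u (6 : Fin 9) = u 5 := rfl
@[simp] lemma cons9_7 (a : α) (u : Fin 8 → α) : Matrix.vecCons a u (7 : Fin 9) = u 6 := rfl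
@[simp] lemma cons9_8 (a : α) (u : Fin 8 → α) : Matrix.vecCons a u (8 : Fin 9) = u 7 := rfl
@[simp] lemma cons10_1 (a : α) (u : Fin 9 → α) : Matrix.vecCons a u (1 : Fin 10) = u 0 := rfl
@[simp] lemma cons10_2 (a : α) (u : Fin 9 → α) : Matrix.vecCons a u (2 : Fin 10) = u 1 := rfl
@[simp] lemma cons10_3 (a : α) (u : Fin 9 → α) : Matrix.vecCons a u (3 : Fin 10) = u 2 := rfl
@[simp] lemma cons10_4 (a : α) (u : Fin 9 → α) : Matrix.vecCons a u (4 : Fin 10) = u 3 := rfl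
@[simp] lemma cons10_5 (a : α) (u : Fin 9 → α) : Matrix.vecCons a u (5 : Fin 10) = u 4 := rfl
@[simp] lemma cons10_6 (a : α) (u : Fin 9 → α) : Matrix.vecCons a u (6 : Fin 10) = u 5 := rfl
@[simp] lemma cons10_7 (a : α) (u : Fin 9 → α) : Matrix.vecCons a u (7 : Fin 10) = u 6 := rfl
@[simp] lemma cons10_8 (a : α) (u : Fin 9 → α) : Matrix.vecCons a u (8 : Fin 10) = u 7 := rfl
@[simp] lemma cons10_9 (a : α) (u : Fin 9 → α) : Matrix.vecCons a u (9 : Fin 10) = u 8 := rfl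
@[simp] lemma cons11_1 (a : α) (u : Fin 10 → α) : Matrix.vecCons a u (1 : Fin 11) = u 0 := rfl
@[simp] lemma cons11_2 (a : α) (u : Fin 10 → α) : Matrix.vecCons a u (2 : Fin 11) = u 1 := rfl
@[simp] lemma cons11_3 (a : α) (u : Fin 10 → α) : Matrix.vecCons a u (3 : Fin 11) = u 2 := rfl
@[simp] lemma cons11_4 (a : α) (u : Fin 10 → α) : Matrix.vecCons a u (4 : Fin 11) = u 3 := rfl
@[simp] lemma cons11_5 (a : α) (u : Fin 10 → α) : Matrix.vecCons a u (5 : Fin 11) = u 4 := rfl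
@[simp] lemma cons11_6 (a : α) (u : Fin 10 → α) : Matrix.vecCons a u (6 : Fin 11) = u 5 := rfl
@[simp] lemma cons11_7 (a : α) (u : Fin 10 → α) : Matrix.vecCons a u (7 : Fin 11) = u 6 := rfl
@[simp] lemma cons11_8 (a : α) (u : Fin 10 → α) : Matrix.vecCons a u (8 : Fin 11) = u 7 := rfl
@[simp] lemma cons11_9 (a : α) (u : Fin 10 → α) : Matrix.vecCons a u (9 : Fin 11) = u 8 := rfl
@[simp] lemma cons11_10 (a : α) (u : Fin 10 → α) : Matrix.vecCons a u (10 : Fin 11) = u 9 := rfl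
@[simp] lemma cons12_1 (a : α) (u : Fin 11 → α) : Matrix.vecCons a u (1 : Fin 12) = u 0 := rfl
@[simp] lemma cons12_2 (a : α) (u : Fin 11 → α) : Matrix.vecCons a u (2 : Fin 12) = u 1 := rfl
@[simp] lemma cons12_3 (a : α) (u : Fin 11 → α) : Matrix.vecCons a u (3 : Fin 12) = u 2 := rfl
@[simp] lemma cons12_4 (a : α) (u : Fin 11 → α) : Matrix.vecCons a u (4 : Fin 12) = u 3 := rfl
@[simp] lemma cons12_5 (a : α) (u : Fin 11 → α) : Matrix.vecCons a u (5 : Fin 12) = u 4 := rfl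
@[simp] lemma cons12_6 (a : α) (u : Fin 11 → α) : Matrix.vecCons a u (6 : Fin 12) = u 5 := rfl
@[simp] lemma cons12_7 (a : α) (u : Fin 11 → α) : Matrix.vecCons a u (7 : Fin 12) = u 6 := rfl
@[simp] lemma cons12_8 (a : α) (u : Fin 11 → α) : Matrix.vecCons a u (8 : Fin 12) = u 7 := rfl
@[simp] lemma cons12_9 (a : α) (u : Fin 11 → α) : Matrix.vecCons a u (9 : Fin 12) = u 8 := rfl
@[simp] lemma cons12_10 (a : α) (u : Fin 11 → α) : Matrix.vecCons a u (10 : Fin 12) = u 9 := rfl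
@[simp] lemma cons12_11 (a : α) (u : Fin 11 → α) : Matrix.vecCons a u (11 : Fin 12) = u 10 := rfl
end consLemmas


lemma sum12 {M : Type*} [AddCommMonoid M] (f : Fin 12 → M) :
    ∑ i, f i = f 0 + f 1 + f 2 + f 3 + f 4 + f 5 + f 6 + f 7 + f 8 + f 9 + f 10 + f 11 := by
  rw [Fin.sum_univ_castSucc, Fin.sum_univ_castSucc, Fin.sum_univ_castSucc, Fin.sum_univ_castSucc,
    Fin.sum_univ_eight]
  rfl

noncomputable def bv : Fin 12 → M6 := ![E1,E2,E3,E31,E32,A1,A2,A3,A31,A32,W1,W2]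

noncomputable def ebr (c d : Fin 12 → ℝ) : Fin 12 → ℝ :=
  ![-(c 0*d 5 - c 5*d 0) - 2*(c 5*d 10 - c 10*d 5),
    -(c 1*d 6 - c 6*d 1) - 2*(c 6*d 11 - c 11*d 6),
    -(c 2*d 7 - c 7*d 2) - 2*(c 3*d 8 - c 8*d 3) - 2*(c 4*d 9 - c 9*d 4),
    -(c 0*d 8 - c 8*d 0) - (1/2)*(c 3*d 5 - c 5*d 3) - (1/2)*(c 3*d 7 - c 7*d 3) - (c 8*d 10 - c 10*d 8),
    -(c 1*d 9 - c 9*d 1) - (1/2)*(c 4*d 6 - c 6*d 4) - (1/2)*(c 4*d 7 - c 7*d 4) - (c 9*d 11 - c 11*d 9),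
    2*(c 0*d 10 - c 10*d 0),
    2*(c 1*d 11 - c 11*d 1),
    0,
    (c 3*d 10 - c 10*d 3) - (1/2)*(c 5*d 8 - c 8*d 5) + (1/2)*(c 7*d 8 - c 8*d 7),
    (c 4*d 11 - c 11*d 4) - (1/2)*(c 6*d 9 - c 9*d 6) + (1/2)*(c 7*d 9 - c 9*d 7),
    -(c 5*d 10 - c 10*d 5),
    -(c 6*d 11 - c 11*d 6)]


lemma Xmat (c : Fin 12 → ℝ) : ∑ i, c i • bv i =
    !![c 5/2, 0, 0, c 0 - c 10, 0, c 3;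
      0, c 6/2, 0, 0, c 1 - c 11, c 4;
      c 8, c 9, c 7/2, c 3, c 4, c 2;
      c 10, 0, 0, -(c 5)/2, 0, -(c 8);
      0, c 11, 0, 0, -(c 6)/2, -(c 9);
      0, 0, 0, 0, 0, -(c 7)/2] := by
  ext i j
  simp only [sum12, bv, Matrix.add_apply, Matrix.smul_apply,
    E1, E2, E3, E31, E32, A1, A2, A3, A31, A32, W1, W2,
    vec12_0, vec12_1, vec12_2, vec12_3, vec12_4, vec12_5, vec12_6, vec12_7, vec12_8, vec12_9,
    vec12_10, vec12_11]
  fin_cases i <;> fin_cases j <;>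
    norm_num [Matrix.vecHead, Matrix.vecTail, Function.comp] <;> ring

lemma master (c d : Fin 12 → ℝ) :
    ⁅∑ i, c i • bv i, ∑ i, d i • bv i⁆ = ∑ i, ebr c d i • bv i := by
  rw [Ring.lie_def, Xmat c, Xmat d, Xmat (ebr c d)]
  ext i j
  simp only [Matrix.sub_apply, Matrix.mul_apply, Fin.sum_univ_six, ebr,
    vec12_0, vec12_1, vec12_2, vec12_3, vec12_4, vec12_5, vec12_6, vec12_7, vec12_8, vec12_9,
    vec12_10, vec12_11]
  fin_cases i <;> fin_cases j <;>
    norm_num [Matrix.vecHead, Matrix.vecTail, Function.comp] <;> ring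


end Infra


noncomputable def SpanS : Submodule ℝ M6 := Submodule.span ℝ (Set.range bv)

lemma mem_SpanS_iff {m : M6} : m ∈ SpanS ↔ ∃ c : Fin 12 → ℝ, ∑ i, c i • bv i = m := by
  rw [SpanS, Submodule.mem_span_range_iff_exists_fun]

noncomputable def Salg : LieSubalgebra ℝ M6 :=
  { SpanS with
    lie_mem' := by
      intro x y hx hy
      rcases mem_SpanS_iff.mp hx with ⟨c, rfl⟩
      rcases mem_SpanS_iff.mp hy with ⟨d, rfl⟩
      show ⁅_, _⁆ ∈ SpanS
      rw [master]
      exact mem_SpanS_iff.mpr ⟨ebr c d, rfl⟩ }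

lemma gLie_le_Salg : gLie ≤ Salg := by
  rw [gLie, LieSubalgebra.lieSpan_le]
  intro m hm
  simp only [gens, Set.mem_insert_iff, Set.mem_singleton_iff] at hm
  rcases hm with h|h|h|h|h|h|h|h|h|h|h|h <;> subst h
  · show E1 ∈ SpanS; exact Submodule.subset_span ⟨0, rfl⟩
  · show E2 ∈ SpanS; exact Submodule.subset_span ⟨1, rfl⟩
  · show E3 ∈ SpanS; exact Submodule.subset_span ⟨2, rfl⟩
  · show E31 ∈ SpanS; exact Submodule.subset_span ⟨3, rfl⟩
  · show E32 ∈ SpanS; exact Submodule.subset_span ⟨4, rfl⟩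
  · show A1 ∈ SpanS; exact Submodule.subset_span ⟨5, rfl⟩
  · show A2 ∈ SpanS; exact Submodule.subset_span ⟨6, rfl⟩
  · show A3 ∈ SpanS; exact Submodule.subset_span ⟨7, rfl⟩
  · show A31 ∈ SpanS; exact Submodule.subset_span ⟨8, rfl⟩
  · show A32 ∈ SpanS; exact Submodule.subset_span ⟨9, rfl⟩
  · show W1 ∈ SpanS; exact Submodule.subset_span ⟨10, rfl⟩
  · show W2 ∈ SpanS; exact Submodule.subset_span ⟨11, rfl⟩

noncomputable def gB : Fin 12 → ↥gLie := ![gE1,gE2,gE3,gE31,gE32,gA1,gA2,gA3,gA31,gA32,gW1,gW2]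

lemma gB_coe (i : Fin 12) : ((gB i : ↥gLie) : M6) = bv i := by fin_cases i <;> rfl

noncomputable def gX (c : Fin 12 → ℝ) : ↥gLie := ∑ i, c i • gB i

lemma gX_coe (c : Fin 12 → ℝ) : ((gX c : ↥gLie) : M6) = ∑ i, c i • bv i := by
  rw [gX]
  rw [show ((↑(∑ i, c i • gB i) : M6)) = gLie.toSubmodule.subtype (∑ i, c i • gB i) from rfl]
  rw [map_sum]
  refine Finset.sum_congr rfl fun i _ => ?_
  rw [LinearMap.map_smul]
  simp [gB_coe]

lemma gX_bracket (c d : Fin 12 → ℝ) : ⁅gX c, gX d⁆ = gX (ebr c d) := by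
  have h1 : ((⁅gX c, gX d⁆ : ↥gLie) : M6) = ((gX (ebr c d) : ↥gLie) : M6) := by
    rw [LieSubalgebra.coe_bracket, gX_coe, gX_coe, gX_coe, master]
  exact Subtype.coe_injective h1

lemma gX_lin (r s : ℝ) (v w : Fin 12 → ℝ) :
    gX (fun k => r * v k + s * w k) = r • gX v + s • gX w := by
  simp only [gX, add_smul, mul_smul, Finset.sum_add_distrib, Finset.smul_sum]

lemma gX_smul (r : ℝ) (v : Fin 12 → ℝ) : gX (fun k => r * v k) = r • gX v := by
  simp only [gX, mul_smul, Finset.smul_sum]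

noncomputable def dl (i : Fin 12) : Fin 12 → ℝ := fun k => if k = i then 1 else 0

lemma gX_dl (i : Fin 12) : gX (dl i) = gB i := by
  simp [gX, dl, ite_smul]

lemma exists_gX (x : ↥gLie) : ∃ c : Fin 12 → ℝ, x = gX c := by
  have hx : (x : M6) ∈ SpanS := gLie_le_Salg x.2
  rcases mem_SpanS_iff.mp hx with ⟨c, hc⟩
  refine ⟨c, Subtype.coe_injective ?_⟩
  show (x : M6) = (gX c : M6)
  rw [gX_coe]; exact hc.symm

set_option maxHeartbeats 4000000 in
theorem ideal_strictly_containing_spanE3_contains_h3_or_h3'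
    (h : LieIdeal ℝ ↥gLie)
    (hgt : Submodule.span ℝ ({gE3} : Set ↥gLie) < (h : Submodule ℝ ↥gLie)) :
    (gE3 ∈ h ∧ gE31 ∈ h ∧ gA31 ∈ h) ∨ (gE3 ∈ h ∧ gE32 ∈ h ∧ gA32 ∈ h) := by
  classical
  have hE3h : gE3 ∈ h := by
    have h1 : gE3 ∈ (h : Submodule ℝ ↥gLie) :=
      hgt.le (Submodule.mem_span_singleton_self gE3)
    exact h1
  obtain ⟨x, hxh0, hxns⟩ := SetLike.exists_of_lt hgt
  have hxh : x ∈ h := hxh0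
  obtain ⟨c, rfl⟩ := exists_gX x
  have hbr : ∀ (i : Fin 12) (v : Fin 12 → ℝ), gX v ∈ h → gX (ebr (dl i) v) ∈ h := by
    intro i v hv
    rw [← gX_bracket]
    exact h.lie_mem hv
  have hcomb : ∀ (r s : ℝ) (v w : Fin 12 → ℝ), gX v ∈ h → gX w ∈ h →
      gX (fun k => r * v k + s * w k) ∈ h := by
    intro r s v w hv hw
    rw [gX_lin]
    exact h.add_mem (h.smul_mem r hv) (h.smul_mem s hw)
  have hsingle : ∀ (r : ℝ), r ≠ 0 → ∀ (i : Fin 12) (v : Fin 12 → ℝ),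
      v = (fun k => r * dl i k) → gX v ∈ h → gB i ∈ h := by
    intro r hr i v hveq hv
    rw [hveq, gX_smul, gX_dl] at hv
    have h2 := h.smul_mem r⁻¹ hv
    rwa [inv_smul_smul₀ hr] at h2
  have hE3X : gX (dl 2) ∈ h := by rw [gX_dl]; exact hE3h
  have EtoA31 : gE31 ∈ h → gA31 ∈ h := by
    intro hE
    have h1 : gX (dl 3) ∈ h := by rw [gX_dl]; exact hE
    have h2 := hbr 10 _ h1
    have h3 : gA31 = gB 8 := rfl
    rw [h3]
    refine hsingle (-1) (by norm_num) 8 _ ?_ h2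
    funext k; fin_cases k <;> simp [ebr, dl]
  have AtoE31 : gA31 ∈ h → gE31 ∈ h := by
    intro hA
    have h1 : gX (dl 8) ∈ h := by rw [gX_dl]; exact hA
    have h2 := hbr 10 _ h1
    have h3 : gE31 = gB 3 := rfl
    rw [h3]
    refine hsingle 1 one_ne_zero 3 _ ?_ h2
    funext k; fin_cases k <;> simp [ebr, dl]
  have EtoA32 : gE32 ∈ h → gA32 ∈ h := by
    intro hE
    have h1 : gX (dl 4) ∈ h := by rw [gX_dl]; exact hE
    have h2 := hbr 11 _ h1
    have h3 : gA32 = gB 9 := rfl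
    rw [h3]
    refine hsingle (-1) (by norm_num) 9 _ ?_ h2
    funext k; fin_cases k <;> simp [ebr, dl]
  have AtoE32 : gA32 ∈ h → gE32 ∈ h := by
    intro hA
    have h1 : gX (dl 9) ∈ h := by rw [gX_dl]; exact hA
    have h2 := hbr 11 _ h1
    have h3 : gE32 = gB 4 := rfl
    rw [h3]
    refine hsingle 1 one_ne_zero 4 _ ?_ h2
    funext k; fin_cases k <;> simp [ebr, dl]
  -- the w-chain
  have m1 : gX (ebr (dl 7) c) ∈ h := hbr 7 _ hxh
  have m2 : gX (ebr (dl 7) (ebr (dl 7) c)) ∈ h := hbr 7 _ m1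
  have m3 := hcomb 4 (-4) _ _ m1 m2
  rcases ne_or_eq (c 3) 0 with hc3 | hc3
  · -- K1 : E31
    have m4 := hbr 5 _ m3
    have m5 := hbr 5 _ m4
    have m6 := hcomb 2 1 _ _ m5 m4
    have hE : gE31 ∈ h := by
      have h3 : gE31 = gB 3 := rfl
      rw [h3]
      refine hsingle (c 3) hc3 3 _ ?_ m6
      funext k; fin_cases k <;> (simp [ebr, dl]; try ring)
    exact Or.inl ⟨hE3h, hE, EtoA31 hE⟩
  rcases ne_or_eq (c 4) 0 with hc4 | hc4
  · -- K1' : E32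
    have m4 := hbr 6 _ m3
    have m5 := hbr 6 _ m4
    have m6 := hcomb 2 1 _ _ m5 m4
    have hE : gE32 ∈ h := by
      have h3 : gE32 = gB 4 := rfl
      rw [h3]
      refine hsingle (c 4) hc4 4 _ ?_ m6
      funext k; fin_cases k <;> (simp [ebr, dl]; try ring)
    exact Or.inr ⟨hE3h, hE, EtoA32 hE⟩
  rcases ne_or_eq (c 8) 0 with hc8 | hc8
  · -- K2 : A31
    have m4 := hbr 5 _ m3
    have m5 := hbr 5 _ m4
    have m6 := hcomb 2 (-1) _ _ m5 m4
    have hA : gA31 ∈ h := by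
      have h3 : gA31 = gB 8 := rfl
      rw [h3]
      refine hsingle (c 8) hc8 8 _ ?_ m6
      funext k; fin_cases k <;> (simp [ebr, dl]; try ring)
    exact Or.inl ⟨hE3h, AtoE31 hA, hA⟩
  rcases ne_or_eq (c 9) 0 with hc9 | hc9
  · -- K2' : A32
    have m4 := hbr 6 _ m3
    have m5 := hbr 6 _ m4
    have m6 := hcomb 2 (-1) _ _ m5 m4
    have hA : gA32 ∈ h := by
      have h3 : gA32 = gB 9 := rfl
      rw [h3]
      refine hsingle (c 9) hc9 9 _ ?_ m6
      funext k; fin_cases k <;> (simp [ebr, dl]; try ring)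
    exact Or.inr ⟨hE3h, AtoE32 hA, hA⟩
  -- s-chain
  have n1 : gX (ebr (dl 3) c) ∈ h := hbr 3 _ hxh
  have n2 := hbr 5 _ n1
  rcases ne_or_eq (c 10) 0 with hc10 | hc10
  · -- K3 : A31
    have n3 := hcomb 1 (-2) _ _ n1 n2
    have n4 := hcomb 1 (2 * c 8) _ _ n3 hE3X
    have hA : gA31 ∈ h := by
      have h3 : gA31 = gB 8 := rfl
      rw [h3]
      refine hsingle (2 * c 10) (by simpa using hc10) 8 _ ?_ n4
      funext k; fin_cases k <;> (simp [ebr, dl]; try ring)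
    exact Or.inl ⟨hE3h, AtoE31 hA, hA⟩
  have t1 : gX (ebr (dl 4) c) ∈ h := hbr 4 _ hxh
  have t2 := hbr 6 _ t1
  rcases ne_or_eq (c 11) 0 with hc11 | hc11
  · -- K3' : A32
    have n3 := hcomb 1 (-2) _ _ t1 t2
    have n4 := hcomb 1 (2 * c 9) _ _ n3 hE3X
    have hA : gA32 ∈ h := by
      have h3 : gA32 = gB 9 := rfl
      rw [h3]
      refine hsingle (2 * c 11) (by simpa using hc11) 9 _ ?_ n4
      funext k; fin_cases k <;> (simp [ebr, dl]; try ring)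
    exact Or.inr ⟨hE3h, AtoE32 hA, hA⟩
  rcases ne_or_eq (c 5 + c 7) 0 with h57 | h57
  · -- K4 : E31
    have n3 := hcomb 1 2 _ _ n1 n2
    have n4 := hcomb 1 (2 * c 8) _ _ n3 hE3X
    have hE : gE31 ∈ h := by
      have h3 : gE31 = gB 3 := rfl
      rw [h3]
      refine hsingle (-(c 5 + c 7)) (neg_ne_zero.mpr h57) 3 _ ?_ n4
      funext k; fin_cases k <;> (simp [ebr, dl]; try ring)
    exact Or.inl ⟨hE3h, hE, EtoA31 hE⟩
  rcases ne_or_eq (c 6 + c 7) 0 with h67 | h67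
  · -- K4' : E32
    have n3 := hcomb 1 2 _ _ t1 t2
    have n4 := hcomb 1 (2 * c 9) _ _ n3 hE3X
    have hE : gE32 ∈ h := by
      have h3 : gE32 = gB 4 := rfl
      rw [h3]
      refine hsingle (-(c 6 + c 7)) (neg_ne_zero.mpr h67) 4 _ ?_ n4
      funext k; fin_cases k <;> (simp [ebr, dl]; try ring)
    exact Or.inr ⟨hE3h, hE, EtoA32 hE⟩
  rcases ne_or_eq (c 7) 0 with hc7 | hc7
  · -- K5 : E31 via E1
    have hc5 : c 5 = -(c 7) := by linarith
    have p1 := hbr 0 _ hxh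
    have p2 := hbr 8 _ p1
    have hE : gE31 ∈ h := by
      have h3 : gE31 = gB 3 := rfl
      rw [h3]
      refine hsingle (c 7) hc7 3 _ ?_ p2
      funext k; fin_cases k <;> (simp [ebr, dl, hc5, hc8, hc10]; try ring)
    exact Or.inl ⟨hE3h, hE, EtoA31 hE⟩
  have hc5 : c 5 = 0 := by linarith
  have hc6 : c 6 = 0 := by linarith
  rcases ne_or_eq (c 0) 0 with hc0 | hc0
  · -- K6 : E31 via A1
    have q1 := hbr 10 _ hxh
    have q2 := hbr 3 _ q1
    have hE : gE31 ∈ h := by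
      have h3 : gE31 = gB 3 := rfl
      rw [h3]
      refine hsingle (c 0) hc0 3 _ ?_ q2
      funext k; fin_cases k <;> (simp [ebr, dl, hc3, hc5]; try ring)
    exact Or.inl ⟨hE3h, hE, EtoA31 hE⟩
  rcases ne_or_eq (c 1) 0 with hc1 | hc1
  · -- K6' : E32 via A2
    have q1 := hbr 11 _ hxh
    have q2 := hbr 4 _ q1
    have hE : gE32 ∈ h := by
      have h3 : gE32 = gB 4 := rfl
      rw [h3]
      refine hsingle (c 1) hc1 4 _ ?_ q2
      funext k; fin_cases k <;> (simp [ebr, dl, hc4, hc6]; try ring)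
    exact Or.inr ⟨hE3h, hE, EtoA32 hE⟩
  -- contradiction : x ∈ span {gE3}
  exfalso
  apply hxns
  have harg : (fun k => c 2 * dl 2 k) = c := by
    funext k
    fin_cases k <;>
      simp [dl, hc0, hc1, hc3, hc4, hc5, hc6, hc7, hc8, hc9, hc10, hc11]
  have h2 : c 2 • gE3 = gX c := by
    rw [show (gE3 : ↥gLie) = gB 2 from rfl, ← gX_dl 2, ← gX_smul, harg]
  rw [← h2]
  exact Submodule.smul_mem _ _ (Submodule.mem_span_singleton_self gE3)
end
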